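/- Let g ≥ 2 and let k₁, k₂ be integers with k₂ ≥ 2 and 0 ≤ k₁ ≤ 1. Let d₁, d₂ be integers with d₁ > d₂ and d₂ ≥ (k₂−1)/k₂ · g + k₂ − 1. Then C₂₁ := g − 1 + d₂ − d₁ + k₂(d₁ − g + 1 − k₁) ≥ 2k₁ and moreover C₂₁ > 0, and C₁₂ := g − 1 + d₁ − d₂ + k₁(d₂ − g + 1 − k₂) ≥ (k₂ − k₁)/k₂ · g > 0. -/

import Mathlib

/-- Flip estimates for rank 2: with k₂ ≥ 2, 0 ≤ k₁ ≤ 1, d₁ > d₂ and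
d₂ ≥ (k₂−1)/k₂·g + k₂−1, one has C₂₁ ≥ 2k₁, C₂₁ > 0, and
C₁₂ ≥ (k₂−k₁)/k₂·g > 0. -/
theorem stmt_12 (g k₁ k₂ d₁ d₂ : ℤ) (hg : 2 ≤ g) (hk₂ : 2 ≤ k₂)
    (hk₁0 : 0 ≤ k₁) (hk₁1 : k₁ ≤ 1) (hd : d₂ < d₁)
    (hd₂ : (d₂ : ℝ) ≥ ((k₂ : ℝ) - 1) / k₂ * g + k₂ - 1) :
    g - 1 + d₂ - d₁ + k₂ * (d₁ - g + 1 - k₁) ≥ 2 * k₁ ∧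
      0 < g - 1 + d₂ - d₁ + k₂ * (d₁ - g + 1 - k₁) ∧
      ((g : ℝ) - 1 + d₁ - d₂ + k₁ * ((d₂ : ℝ) - g + 1 - k₂) ≥
        ((k₂ : ℝ) - k₁) / k₂ * g) ∧
      (0 : ℝ) < ((k₂ : ℝ) - k₁) / k₂ * g := by
  have hk₂R : (0 : ℝ) < (k₂ : ℝ) := by positivity
  -- integer form of hd₂ : k₂ * d₂ ≥ (k₂ - 1) * (g + k₂)
  have hintR : ((k₂ : ℝ) * d₂) ≥ ((k₂ : ℝ) - 1) * (g + k₂) := by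
    have := mul_le_mul_of_nonneg_left hd₂ (le_of_lt hk₂R)
    have h2 : ((k₂ : ℝ) - 1) / k₂ * g * k₂ = ((k₂ : ℝ) - 1) * g := by
      field_simp
    nlinarith [this, h2]
  have hint : k₂ * d₂ ≥ (k₂ - 1) * (g + k₂) := by
    exact_mod_cast hintR
  have hd' : d₂ + 1 ≤ d₁ := hd
  interval_cases k₁
  · refine ⟨by nlinarith, by nlinarith, ?_, ?_⟩
    · push_cast
      have : ((k₂ : ℝ) - 0) / k₂ * g = g := by field_simp; simp
      rw [this]
      have : (d₂ : ℝ) + 1 ≤ d₁ := by exact_mod_cast hd'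
      push_cast
      linarith
    · push_cast
      have : ((k₂:ℝ)-0)/k₂*g = g := by field_simp; simp
      rw [this]; positivity
  · refine ⟨by nlinarith, by nlinarith, ?_, ?_⟩
    · have h1 : ((k₂ : ℝ) - 1) / k₂ * g * k₂ = ((k₂ : ℝ) - 1) * g := by field_simp
      rw [ge_iff_le, div_mul_eq_mul_div, div_le_iff₀ hk₂R]
      have hd1R : (d₂ : ℝ) + 1 ≤ d₁ := by exact_mod_cast hd'
      push_cast
      nlinarith [hintR, hd1R]
    · apply mul_pos
      · have h2R : (2:ℝ) ≤ (k₂:ℝ) := by exact_mod_cast hk₂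
        apply div_pos (by push_cast; linarith) hk₂R
      · positivity
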